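/- The map f sending a pair (λ, i), where λ ⊢ n is written with distinct part sizes a₁ > ⋯ > a_s and i ∈ {1,…,s+1}, to the pair (λ̄, j), where λ̄ ⊢ n+1 is obtained by adding 1 to the (M_{λ,i−1}+1)-th component of λ (with M_{λ,0}=0, M_{λ,k}=m_{a₁}+⋯+m_{aₖ}, and i = s+1 corresponding to appending a new part 1) and j is the unique index with M_{λ̄,j} = M_{λ,i−1}+1, is a bijection from {(λ,i) : λ ⊢ n, 1 ≤ i ≤ s(λ)+1} onto {(λ̄,j) : λ̄ ⊢ n+1, 1 ≤ j ≤ r(λ̄)}. -/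

import Mathlib

/-- `l` is a partition of `n`: a nonincreasing list of positive integers summing to `n`.
Its distinct part sizes, in decreasing order, are given by `l.dedup`, so the number of
distinct part sizes is `l.dedup.length`. -/
def IsPartitionOf (n : ℕ) (l : List ℕ) : Prop :=
  (∀ a ∈ l, 0 < a) ∧ l.Pairwise (· ≥ ·) ∧ l.sum = n

/-- Add `1` to the component of `l` at (0-based) position `pos`, appending a new part `1`
if `pos` is past the end of `l`. -/
def addOneAt (l : List ℕ) (pos : ℕ) : List ℕ :=
  if pos < l.length then l.set pos (l.getD pos 0 + 1) else l ++ [1]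

/-- The map `f` of the paper: given `(λ, i)` with `λ ⊢ n` written with distinct part sizes
`a₁ > ⋯ > a_s` and `1 ≤ i ≤ s+1`, add `1` to the `(M_{λ,i−1}+1)`-th component of `λ`
(the first occurrence of the `i`-th largest distinct part; `i = s+1` appends a new part `1`),
obtaining `λ̄ ⊢ n+1`, paired with the unique `j` such that `M_{λ̄,j} = M_{λ,i−1}+1`,
i.e. `j` is the number of distinct values among the first `M_{λ,i−1}+1` entries of `λ̄`. -/
def partMap (l : List ℕ) (i : ℕ) : List ℕ × ℕ :=
  let v : ℕ := l.dedup.getD (i - 1) 0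
  let pos : ℕ := l.countP (fun a => decide (v < a))
  let lbar : List ℕ := addOneAt l pos
  (lbar, ((lbar.take (pos + 1)).dedup).length)


lemma sorted_take_count {l : List ℕ} (h : l.Pairwise (· ≥ ·)) (c : ℕ) :
    (∀ x ∈ l.take (l.countP (fun a => decide (c ≤ a))), c ≤ x) ∧
    (∀ x ∈ l.drop (l.countP (fun a => decide (c ≤ a))), x < c) := by
  induction l with
  | nil => simp
  | cons a t ih =>
    rw [List.pairwise_cons] at h
    obtain ⟨ha, ht⟩ := h
    by_cases hc : c ≤ a
    · rw [List.countP_cons_of_pos (by simpa using hc)]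
      obtain ⟨ih1, ih2⟩ := ih ht
      refine ⟨?_, ?_⟩
      · intro x hx
        rw [List.take_succ_cons] at hx
        rcases List.mem_cons.1 hx with rfl | hx
        · exact hc
        · exact ih1 x hx
      · intro x hx
        rw [List.drop_succ_cons] at hx
        exact ih2 x hx
    · have h0 : (a :: t).countP (fun a => decide (c ≤ a)) = 0 := by
        rw [List.countP_eq_zero]
        intro x hx
        rcases List.mem_cons.1 hx with rfl | hx
        · simpa using hc
        · simp only [decide_eq_true_eq]
          intro hcx
          exact hc (le_trans hcx (ha x hx))
      rw [h0]
      refine ⟨by simp, ?_⟩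
      intro x hx
      rw [List.drop_zero] at hx
      rcases List.mem_cons.1 hx with rfl | hx
      · omega
      · have := ha x hx; omega

lemma head_of_max {l : List ℕ} (h : l.Pairwise (· ≥ ·)) {b : ℕ} (hb : b ∈ l)
    (hmax : ∀ x ∈ l, x ≤ b) : ∃ t, l = b :: t := by
  cases l with
  | nil => simp at hb
  | cons a t =>
    rw [List.pairwise_cons] at h
    have hab : a ≤ b := hmax a (by simp)
    have hba : b ≤ a := by
      rcases List.mem_cons.1 hb with rfl | hb'
      · exact le_refl _
      · exact h.1 b hb'
    exact ⟨t, by rw [le_antisymm hab hba]⟩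

lemma getLast?_min {l : List ℕ} (h : l.Pairwise (· ≥ ·)) {b : ℕ} (hb : b ∈ l)
    (hmin : ∀ x ∈ l, b ≤ x) : l.getLast? = some b := by
  induction l with
  | nil => simp at hb
  | cons a t ih =>
    rw [List.pairwise_cons] at h
    cases t with
    | nil => simp at hb ⊢; omega
    | cons a' t' =>
      rw [List.getLast?_cons_cons]
      have hbt : b ∈ a' :: t' := by
        rcases List.mem_cons.1 hb with rfl | hb'
        · have h1 : a' ≤ b := h.1 a' (by simp)
          have h2 : b ≤ a' := hmin a' (by simp)
          have : a' = b := le_antisymm h1 h2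
          rw [← this]; simp
        · exact hb'
      exact ih h.2 hbt (fun x hx => hmin x (List.mem_cons_of_mem _ hx))

lemma dedup_getLast? (l : List ℕ) : l.dedup.getLast? = l.getLast? := by
  induction l with
  | nil => rfl
  | cons a t ih =>
    by_cases hat : a ∈ t
    · rw [List.dedup_cons_of_mem hat, ih]
      cases t with
      | nil => simp at hat
      | cons a' t' => rw [List.getLast?_cons_cons]
    · rw [List.dedup_cons_of_notMem hat]
      cases t with
      | nil => rfl
      | cons a' t' =>
        have hne : (a' :: t').dedup ≠ [] := by
          intro hnil
          have : a' ∈ (a' :: t').dedup := List.mem_dedup.2 (by simp)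
          rw [hnil] at this; simp at this
        rw [List.getLast?_cons_cons, ← ih]
        cases hd : (a' :: t').dedup with
        | nil => exact absurd hd hne
        | cons x u => rw [List.getLast?_cons_cons]

lemma dedup_sorted' {l : List ℕ} (h : l.Pairwise (· ≥ ·)) : l.dedup.Pairwise (· ≥ ·) :=
  List.Pairwise.sublist (List.dedup_sublist l) h

lemma dedup_take_prefix {l : List ℕ} (h : l.Pairwise (· ≥ ·)) (k : ℕ) :
    (l.take k).dedup.IsPrefix l.dedup := by
  induction l generalizing k with
  | nil => simp
  | cons a t ih =>
    rw [List.pairwise_cons] at h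
    cases k with
    | zero => simp
    | succ k' =>
      rw [List.take_succ_cons]
      by_cases h1 : a ∈ t.take k'
      · rw [List.dedup_cons_of_mem h1, List.dedup_cons_of_mem (List.take_sublist k' t |>.mem h1)]
        exact ih h.2 k'
      · rw [List.dedup_cons_of_notMem h1]
        by_cases h2 : a ∈ t
        · rw [List.dedup_cons_of_mem h2]
          obtain ⟨t', ht'⟩ := head_of_max h.2 h2 h.1
          have hk0 : k' = 0 := by
            by_contra hk
            apply h1
            rw [ht']
            cases k' with
            | zero => omega
            | succ k'' => simp
          subst hk0
          simp only [List.take_zero, List.dedup_nil]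
          -- goal: [a] <+: t.dedup
          have hmem : a ∈ t.dedup := List.mem_dedup.2 h2
          have hsorted : t.dedup.Pairwise (· ≥ ·) := dedup_sorted' h.2
          have hmax : ∀ x ∈ t.dedup, x ≤ a := fun x hx => h.1 x (List.mem_dedup.1 hx)
          obtain ⟨u, hu⟩ := head_of_max hsorted hmem hmax
          rw [hu]
          exact ⟨u, by simp⟩
        · rw [List.dedup_cons_of_notMem h2]
          exact (List.cons_prefix_cons).2 ⟨rfl, ih h.2 k'⟩

lemma nodup_getD_inj {s : List ℕ} (h : s.Nodup) {i j : ℕ} (hi : i < s.length)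
    (hj : j < s.length) (he : s.getD i 0 = s.getD j 0) : i = j := by
  rw [List.getD_eq_getElem _ _ hi, List.getD_eq_getElem _ _ hj] at he
  exact (h.getElem_inj_iff).1 he

lemma lemC {m : List ℕ} (h : m.Pairwise (· ≥ ·)) {b : ℕ} (hb : b ∈ m) :
    1 ≤ m.countP (fun a => decide (b ≤ a)) ∧
    m.countP (fun a => decide (b ≤ a)) ≤ m.length ∧
    m.getD (m.countP (fun a => decide (b ≤ a)) - 1) 0 = b ∧
    1 ≤ ((m.take (m.countP (fun a => decide (b ≤ a)))).dedup).length ∧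
    ((m.take (m.countP (fun a => decide (b ≤ a)))).dedup).length ≤ m.dedup.length ∧
    m.dedup.getD (((m.take (m.countP (fun a => decide (b ≤ a)))).dedup).length - 1) 0 = b := by
  set k := m.countP (fun a => decide (b ≤ a)) with hkdef
  have hk1 : 1 ≤ k := List.countP_pos_iff.2 ⟨b, hb, by simp⟩
  have hk2 : k ≤ m.length := List.countP_le_length
  have htk := sorted_take_count h b
  rw [← hkdef] at htk
  have hbtake : b ∈ m.take k := by
    rcases (List.mem_append.1 (by rw [List.take_append_drop]; exact hb :
        b ∈ m.take k ++ m.drop k)) with h' | h'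
    · exact h'
    · exact absurd (htk.2 b h') (by omega)
  have hsortedtake : (m.take k).Pairwise (· ≥ ·) :=
    List.Pairwise.sublist (List.take_sublist k m) h
  have hlast : (m.take k).getLast? = some b := getLast?_min hsortedtake hbtake htk.1
  have hlentake : (m.take k).length = k := by
    rw [List.length_take]; omega
  have hgd : m.getD (k - 1) 0 = b := by
    rw [List.getD_eq_getElem?_getD]
    have h1 : (m.take k)[k-1]? = m[k-1]? := by
      rw [List.getElem?_take, if_pos (by omega)]
    rw [← h1]
    rw [List.getLast?_eq_getElem?, hlentake] at hlast
    rw [hlast]; rfl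
  have hpre := dedup_take_prefix h k
  set T := (m.take k).dedup with hTdef
  have hbT : b ∈ T := List.mem_dedup.2 hbtake
  have hj1 : 1 ≤ T.length := List.length_pos_iff.2 (by intro he; rw [he] at hbT; simp at hbT)
  have hj2 : T.length ≤ m.dedup.length := hpre.length_le
  have hTlast : T.getLast? = some b := by rw [hTdef, dedup_getLast?, hlast]
  refine ⟨hk1, hk2, hgd, hj1, hj2, ?_⟩
  obtain ⟨r, hr⟩ := hpre
  rw [List.getD_eq_getElem?_getD, ← hr, List.getElem?_append_left (by omega),
    ← List.getLast?_eq_getElem?, hTlast]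
  rfl

lemma step_lemma {l : List ℕ} (hs : l.Pairwise (· ≥ ·)) (hpos : ∀ a ∈ l, 0 < a)
    {v : ℕ} (hv : v ∈ l) :
    l.countP (fun a => decide (v < a)) < l.length ∧
    l = l.take (l.countP (fun a => decide (v < a))) ++
        v :: l.drop (l.countP (fun a => decide (v < a)) + 1) ∧
    l.set (l.countP (fun a => decide (v < a))) (v + 1) =
      l.take (l.countP (fun a => decide (v < a))) ++
        (v + 1) :: l.drop (l.countP (fun a => decide (v < a)) + 1) ∧
    (l.set (l.countP (fun a => decide (v < a))) (v + 1)).countP (fun a => decide (v + 1 ≤ a)) =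
      l.countP (fun a => decide (v < a)) + 1 ∧
    (l.set (l.countP (fun a => decide (v < a))) (v + 1)).Pairwise (· ≥ ·) ∧
    (∀ a ∈ l.set (l.countP (fun a => decide (v < a))) (v + 1), 0 < a) ∧
    (l.set (l.countP (fun a => decide (v < a))) (v + 1)).sum = l.sum + 1 ∧
    (l.set (l.countP (fun a => decide (v < a))) (v + 1)).set
      (l.countP (fun a => decide (v < a))) v = l ∧
    l.getD (l.countP (fun a => decide (v < a))) 0 = v := by
  have hcount : l.countP (fun a => decide (v < a)) = l.countP (fun a => decide (v + 1 ≤ a)) :=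
    List.countP_congr (fun x _ => by simp only [decide_eq_true_eq]; omega)
  set pos := l.countP (fun a => decide (v < a)) with hposdef
  have htk := sorted_take_count hs (v + 1)
  rw [← hcount] at htk
  have hvnottake : v ∉ l.take pos := fun h' => by have := htk.1 v h'; omega
  have hvdrop : v ∈ l.drop pos := by
    rcases List.mem_append.1 (by rw [List.take_append_drop]; exact hv :
        v ∈ l.take pos ++ l.drop pos) with h' | h'
    · exact absurd h' hvnottake
    · exact h'
  have hposlt : pos < l.length := by
    by_contra h'
    rw [(List.drop_eq_nil_iff).2 (by omega)] at hvdrop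
    simp at hvdrop
  have hdropsorted : (l.drop pos).Pairwise (· ≥ ·) :=
    List.Pairwise.sublist (List.drop_sublist pos l) hs
  obtain ⟨t, ht⟩ := head_of_max hdropsorted hvdrop
    (fun x hx => by have := htk.2 x hx; omega)
  have htail : l.drop (pos + 1) = t := by
    rw [← List.tail_drop, ht]; rfl
  have hdecomp : l = l.take pos ++ v :: l.drop (pos + 1) := by
    conv_lhs => rw [← List.take_append_drop pos l]
    rw [ht, htail]
  have hlentake : (l.take pos).length = pos := by rw [List.length_take]; omega
  have hset : l.set pos (v + 1) = l.take pos ++ (v + 1) :: l.drop (pos + 1) := by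
    rw [List.set_eq_take_append_cons_drop, if_pos hposlt]
  have hdropmem : ∀ x ∈ l.drop (pos + 1), x ≤ v := by
    intro x hx
    rw [htail] at hx
    have : x ∈ l.drop pos := by rw [ht]; exact List.mem_cons_of_mem _ hx
    have := htk.2 x this; omega
  have htakemem : ∀ x ∈ l.take pos, v + 1 ≤ x := htk.1
  have hcount2 : (l.set pos (v + 1)).countP (fun a => decide (v + 1 ≤ a)) = pos + 1 := by
    rw [hset, List.countP_append, List.countP_cons_of_pos (by simp)]
    have h1 : (l.take pos).countP (fun a => decide (v + 1 ≤ a)) = pos := by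
      rw [List.countP_eq_length.2 (fun x hx => by simpa using htakemem x hx), hlentake]
    have h2 : (l.drop (pos + 1)).countP (fun a => decide (v + 1 ≤ a)) = 0 :=
      List.countP_eq_zero.2 (fun x hx => by simpa using by have := hdropmem x hx; omega)
    omega
  have hsorted2 : (l.set pos (v + 1)).Pairwise (· ≥ ·) := by
    rw [hset]
    refine (List.pairwise_append).2 ⟨List.Pairwise.sublist (List.take_sublist pos l) hs, ?_, ?_⟩
    · rw [List.pairwise_cons]
      exact ⟨fun x hx => by have := hdropmem x hx; omega,
        List.Pairwise.sublist (List.drop_sublist _ l) hs⟩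
    · intro a ha b hb
      have ha' := htakemem a ha
      rcases List.mem_cons.1 hb with rfl | hb'
      · omega
      · have := hdropmem b hb'; omega
  have hpos2 : ∀ a ∈ l.set pos (v + 1), 0 < a := by
    rw [hset]
    intro a ha
    rcases List.mem_append.1 ha with h' | h'
    · exact hpos a (List.take_sublist pos l |>.mem h')
    · rcases List.mem_cons.1 h' with rfl | h''
      · omega
      · exact hpos a (List.drop_sublist _ l |>.mem h'')
  have hsum : (l.set pos (v + 1)).sum = l.sum + 1 := by
    rw [hset]
    conv_rhs => rw [hdecomp]
    simp [List.sum_append, List.sum_cons]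
    omega
  have hsetback : (l.set pos (v + 1)).set pos v = l := by
    rw [List.set_set, List.set_eq_take_append_cons_drop, if_pos hposlt, ← hdecomp]
  have hgd : l.getD pos 0 = v := by
    rw [List.getD_eq_getElem?_getD]
    have : l[pos]? = some v := by
      conv_lhs => rw [hdecomp]
      rw [List.getElem?_append_right (by omega), hlentake]
      simp
    rw [this]; rfl
  exact ⟨hposlt, hdecomp, hset, hcount2, hsorted2, hpos2, hsum, hsetback, hgd⟩

lemma forward_top {l : List ℕ} (hpos : ∀ a ∈ l, 0 < a) :
    partMap l (l.dedup.length + 1) = (l ++ [1], (l ++ [1]).dedup.length) ∧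
    (l ++ [1]).dedup.getD ((l ++ [1]).dedup.length - 1) 0 = 1 ∧
    1 ≤ (l ++ [1]).dedup.length := by
  have hv : l.dedup.getD (l.dedup.length + 1 - 1) 0 = 0 :=
    List.getD_eq_default _ _ (by omega)
  have hcount : l.countP (fun a => decide ((0:ℕ) < a)) = l.length :=
    List.countP_eq_length.2 (fun a ha => by simpa using hpos a ha)
  have hlen1 : 1 ≤ (l ++ [1]).dedup.length := by
    have : (1:ℕ) ∈ (l ++ [1]).dedup := List.mem_dedup.2 (by simp)
    exact List.length_pos_iff.2 (by intro he; rw [he] at this; simp at this)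
  refine ⟨?_, ?_, hlen1⟩
  · simp only [partMap, hv, hcount, addOneAt, lt_irrefl, if_false,
      List.take_of_length_le (by simp : (l ++ [1]).length ≤ l.length + 1)]
  · have h1 : (l ++ [1]).dedup.getLast? = some 1 := by
      rw [dedup_getLast?, List.getLast?_concat]
    rw [List.getLast?_eq_getElem?] at h1
    rw [List.getD_eq_getElem?_getD, h1]; rfl

lemma forward_mid {l : List ℕ} (hs : l.Pairwise (· ≥ ·)) (hpos : ∀ a ∈ l, 0 < a)
    {i : ℕ} (h1 : 1 ≤ i) (h2 : i ≤ l.dedup.length) :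
    ∃ m j, partMap l i = (m, j) ∧ m.Pairwise (· ≥ ·) ∧ (∀ a ∈ m, 0 < a) ∧
      m.sum = l.sum + 1 ∧ 1 ≤ j ∧ j ≤ m.dedup.length ∧
      2 ≤ m.dedup.getD (j - 1) 0 ∧
      1 ≤ m.countP (fun a => decide (m.dedup.getD (j - 1) 0 ≤ a)) ∧
      m.set (m.countP (fun a => decide (m.dedup.getD (j - 1) 0 ≤ a)) - 1)
        (m.dedup.getD (j - 1) 0 - 1) = l ∧
      l.dedup.getD (i - 1) 0 = m.dedup.getD (j - 1) 0 - 1 := by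
  set v := l.dedup.getD (i - 1) 0 with hvdef
  have hiv : i - 1 < l.dedup.length := by omega
  have hvmem : v ∈ l := by
    rw [hvdef, List.getD_eq_getElem _ _ hiv]
    exact List.mem_dedup.1 (List.getElem_mem hiv)
  have hvpos : 0 < v := hpos v hvmem
  obtain ⟨hposlt, hdecomp, hset, hcount2, hsorted2, hpos2, hsum, hsetback, hgd⟩ :=
    step_lemma hs hpos hvmem
  set pos := l.countP (fun a => decide (v < a)) with hposdef
  set m := l.set pos (v + 1) with hmdef
  have hvm : v + 1 ∈ m := by
    rw [hset]
    exact List.mem_append.2 (Or.inr (List.mem_cons_self))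
  obtain ⟨hk1, hk2, hgdk, hj1, hj2, hgdj⟩ := lemC hsorted2 hvm
  rw [hcount2] at hgdk hgdj hj1 hj2
  set j := ((m.take (pos + 1)).dedup).length with hjdef
  have hpm : partMap l i = (m, j) := by
    simp only [partMap, ← hvdef, ← hposdef, addOneAt, if_pos hposlt, hgd, ← hmdef, ← hjdef]
  have hb : m.dedup.getD (j - 1) 0 = v + 1 := hgdj
  refine ⟨m, j, hpm, hsorted2, hpos2, hsum, hj1, hj2, by omega, ?_, ?_, ?_⟩
  · rw [hb, hcount2]; omega
  · rw [hb, hcount2]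
    simpa using hsetback
  · rw [hb]
    omega

lemma backward {m : List ℕ} (hs : m.Pairwise (· ≥ ·)) (hpos : ∀ a ∈ m, 0 < a)
    (hne : m ≠ []) {j : ℕ} (hj1 : 1 ≤ j) (hj2 : j ≤ m.dedup.length) :
    ∃ l i, partMap l i = (m, j) ∧ l.Pairwise (· ≥ ·) ∧ (∀ a ∈ l, 0 < a) ∧
      l.sum + 1 = m.sum ∧ 1 ≤ i ∧ i ≤ l.dedup.length + 1 := by
  have hmlen : 1 ≤ m.length := List.length_pos_iff.2 hne
  set b := m.dedup.getD (j - 1) 0 with hbdef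
  have hjlt : j - 1 < m.dedup.length := by omega
  have hbm : b ∈ m := by
    rw [hbdef, List.getD_eq_getElem _ _ hjlt]
    exact List.mem_dedup.1 (List.getElem_mem hjlt)
  have hbpos : 0 < b := hpos b hbm
  obtain ⟨hk1, hk2, hgdk, hj01, hj02, hgdj0⟩ := lemC hs hbm
  set k := m.countP (fun a => decide (b ≤ a)) with hkdef
  set j₀ := ((m.take k).dedup).length with hj0def
  have hjj0 : j₀ = j := by
    have := nodup_getD_inj (List.nodup_dedup m) (by omega : j₀ - 1 < m.dedup.length)
      (by omega : j - 1 < m.dedup.length) (by rw [hgdj0])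
    omega
  by_cases hb1 : b = 1
  · -- top case
    have hkl : k = m.length := by
      rw [hkdef]
      exact List.countP_eq_length.2 (fun a ha => by
        simp only [decide_eq_true_eq]
        have := hpos a ha; omega)
    set l := m.take (m.length - 1) with hldef
    have hdrop : m.drop (m.length - 1) = [1] := by
      rw [List.drop_eq_getElem_cons (by omega : m.length - 1 < m.length)]
      have h1 : m[m.length - 1] = 1 := by
        have h' := hgdk
        rw [hkl] at h'
        rw [List.getD_eq_getElem m 0 (by omega)] at h'
        rw [h', hb1]
      rw [h1]
      have : m.length - 1 + 1 = m.length := by omega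
      rw [this, List.drop_length]
    have hdec : m = l ++ [1] := by
      conv_lhs => rw [← List.take_append_drop (m.length - 1) m]
      rw [hdrop]
    have hposl : ∀ a ∈ l, 0 < a := fun a ha => hpos a (List.take_sublist _ m |>.mem ha)
    obtain ⟨hpm, _, _⟩ := forward_top hposl
    refine ⟨l, l.dedup.length + 1, ?_, List.Pairwise.sublist (List.take_sublist _ m) hs,
      hposl, ?_, by omega, by omega⟩
    · rw [hpm, ← hdec]
      have : (m.take k) = m := by rw [hkl]; exact List.take_of_length_le (le_refl _)
      rw [← hjj0, hj0def, this]
    · rw [hdec, List.sum_append]; simp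
  · -- middle case
    have hb2 : 2 ≤ b := by omega
    set v := b - 1 with hvdef
    have hbv : b = v + 1 := by omega
    have hk3 : k - 1 < m.length := by omega
    have hdropm : m.drop (k - 1) = b :: m.drop k := by
      rw [List.drop_eq_getElem_cons (by omega : k - 1 < m.length)]
      have h1 : m[k - 1] = b := by
        rw [← List.getD_eq_getElem m 0 (by omega)]; exact hgdk
      have h2 : k - 1 + 1 = k := by omega
      rw [h1, h2]
    have hdecm : m = m.take (k - 1) ++ b :: m.drop k := by
      conv_lhs => rw [← List.take_append_drop (k - 1) m]
      rw [hdropm]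
    have htk := sorted_take_count hs b
    rw [← hkdef] at htk
    set l := m.set (k - 1) v with hldef
    have hsetl : l = m.take (k - 1) ++ v :: m.drop k := by
      rw [hldef, List.set_eq_take_append_cons_drop, if_pos hk3]
      have : k - 1 + 1 = k := by omega
      rw [this]
    have htksub : ∀ x ∈ m.take (k - 1), b ≤ x := by
      intro x hx
      apply htk.1
      have : m.take (k-1) = (m.take k).take (k-1) := by
        rw [List.take_take]; congr 1; omega
      rw [this] at hx
      exact List.take_sublist _ _ |>.mem hx
    have hdropk : ∀ x ∈ m.drop k, x < b := htk.2
    have hsortedl : l.Pairwise (· ≥ ·) := by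
      rw [hsetl]
      refine (List.pairwise_append).2
        ⟨List.Pairwise.sublist (List.take_sublist _ m) hs, ?_, ?_⟩
      · rw [List.pairwise_cons]
        exact ⟨fun x hx => by have := hdropk x hx; omega,
          List.Pairwise.sublist (List.drop_sublist _ m) hs⟩
      · intro a ha c hc
        have ha' := htksub a ha
        rcases List.mem_cons.1 hc with rfl | hc'
        · omega
        · have := hdropk c hc'; omega
    have hposel : ∀ a ∈ l, 0 < a := by
      rw [hsetl]
      intro a ha
      rcases List.mem_append.1 ha with h' | h'
      · exact hpos a (List.take_sublist _ m |>.mem h')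
      · rcases List.mem_cons.1 h' with rfl | h''
        · omega
        · exact hpos a (List.drop_sublist _ m |>.mem h'')
    have hsuml : l.sum + 1 = m.sum := by
      rw [hsetl]
      conv_rhs => rw [hdecm]
      simp [List.sum_append, List.sum_cons]
      omega
    have hvl : v ∈ l := by
      rw [hsetl]; exact List.mem_append.2 (Or.inr (List.mem_cons_self))
    obtain ⟨hposlt', hdecomp', hset', hcount2', hsorted2', hpos2', hsum', hsetback', hgd'⟩ :=
      step_lemma hsortedl hposel hvl
    set pos' := l.countP (fun a => decide (v < a)) with hpos'def
    have hpos'k : pos' = k - 1 := by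
      rw [hpos'def]
      have hcongr : l.countP (fun a => decide (v < a)) = l.countP (fun a => decide (b ≤ a)) :=
        List.countP_congr (fun x _ => by
          simp only [decide_eq_true_eq]; omega)
      rw [hcongr, hsetl, List.countP_append, List.countP_cons_of_neg
        (by simp only [decide_eq_true_eq]; omega)]
      have h1 : (m.take (k - 1)).countP (fun a => decide (b ≤ a)) = k - 1 := by
        rw [List.countP_eq_length.2 (fun x hx => by simpa using htksub x hx)]
        rw [List.length_take]; omega
      have h2 : (m.drop k).countP (fun a => decide (b ≤ a)) = 0 :=
        List.countP_eq_zero.2 (fun x hx => by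
          simp only [decide_eq_true_eq]
          have := hdropk x hx; omega)
      omega
    -- the index i
    obtain ⟨hi1', hi2', hgdi', hii1, hii2, hgdii⟩ := lemC hsortedl hvl
    set i := ((l.take (l.countP (fun a => decide (v ≤ a)))).dedup).length with hidef
    have hsetm : l.set pos' (v + 1) = m := by
      rw [hldef, hpos'k, List.set_set, ← hbv]
      rw [List.set_eq_take_append_cons_drop, if_pos hk3]
      have : k - 1 + 1 = k := by omega
      rw [this, ← hdecm]
    have hpm : partMap l i = (m, j) := by
      have hlast : ((l.set pos' (v+1)).take (pos' + 1)).dedup.length = j := by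
        rw [hsetm, hpos'k]
        have : k - 1 + 1 = k := by omega
        rw [this, ← hj0def, hjj0]
      simp only [partMap, ← hidef, hgdii, ← hpos'def, addOneAt, if_pos hposlt', hgd']
      rw [hsetm] at hlast ⊢
      rw [hlast]
    exact ⟨l, i, hpm, hsortedl, hposel, hsuml, hii1, by omega⟩

/-- The map `(λ, i) ↦ (λ̄, j)` is a bijection from
`{(λ, i) : λ ⊢ n, 1 ≤ i ≤ s(λ)+1}` onto `{(λ̄, j) : λ̄ ⊢ n+1, 1 ≤ j ≤ r(λ̄)}`. -/
theorem stmt17 (n : ℕ) (hn : 1 ≤ n) :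
    Set.BijOn (fun p : List ℕ × ℕ => partMap p.1 p.2)
      {p : List ℕ × ℕ | IsPartitionOf n p.1 ∧ 1 ≤ p.2 ∧ p.2 ≤ p.1.dedup.length + 1}
      {q : List ℕ × ℕ | IsPartitionOf (n + 1) q.1 ∧ 1 ≤ q.2 ∧ q.2 ≤ q.1.dedup.length} := by
  refine ⟨?_, ?_, ?_⟩
  · -- MapsTo
    rintro ⟨l, i⟩ ⟨⟨hpos, hs, hsum⟩, hi1, hi2⟩
    dsimp only at hpos hs hsum hi1 hi2
    simp only [Set.mem_setOf_eq]
    by_cases htop : i = l.dedup.length + 1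
    · subst htop
      obtain ⟨hpm, hb, hlen⟩ := forward_top hpos
      rw [hpm]
      refine ⟨⟨?_, ?_, ?_⟩, hlen, le_refl _⟩
      · intro a ha
        rcases List.mem_append.1 ha with h' | h'
        · exact hpos a h'
        · simp at h'; omega
      · refine (List.pairwise_append).2 ⟨hs, by simp, ?_⟩
        intro a ha c hc
        simp at hc
        subst hc
        exact hpos a ha
      · rw [List.sum_append, hsum]; simp
    · have h2' : i ≤ l.dedup.length := by omega
      obtain ⟨m, j, hpm, hms, hmp, hmsum, hj1, hj2, _, _, _, _⟩ :=
        forward_mid hs hpos hi1 h2'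
      rw [hpm]
      exact ⟨⟨hmp, hms, by show m.sum = n + 1; omega⟩, hj1, hj2⟩
  · -- InjOn
    rintro ⟨l, i⟩ ⟨⟨hpos, hs, hsum⟩, hi1, hi2⟩ ⟨l', i'⟩ ⟨⟨hpos', hs', hsum'⟩, hi1', hi2'⟩ heq
    dsimp only at hpos hs hsum hi1 hi2 hpos' hs' hsum' hi1' hi2'
    simp only at heq
    by_cases ht : i = l.dedup.length + 1 <;> by_cases ht' : i' = l'.dedup.length + 1
    · -- both top
      subst ht; subst ht'
      obtain ⟨hpm, _, _⟩ := forward_top hpos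
      obtain ⟨hpm', _, _⟩ := forward_top hpos'
      rw [hpm, hpm', Prod.mk.injEq] at heq
      have hll : l = l' := List.append_cancel_right heq.1
      subst hll
      rfl
    · -- i top, i' mid : contradiction
      exfalso
      subst ht
      obtain ⟨hpm, hb, _⟩ := forward_top hpos
      obtain ⟨m', j', hpm', _, _, _, _, _, hb2', _, _, _⟩ :=
        forward_mid hs' hpos' hi1' (by omega)
      rw [hpm, hpm', Prod.mk.injEq] at heq
      obtain ⟨he1, he2⟩ := heq
      rw [← he1, ← he2] at hb2'
      omega
    · -- i mid, i' top : contradiction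
      exfalso
      subst ht'
      obtain ⟨hpm', hb, _⟩ := forward_top hpos'
      obtain ⟨m, j, hpm, _, _, _, _, _, hb2, _, _, _⟩ :=
        forward_mid hs hpos hi1 (by omega)
      rw [hpm, hpm', Prod.mk.injEq] at heq
      obtain ⟨he1, he2⟩ := heq
      rw [he1, he2] at hb2
      omega
    · -- both mid
      obtain ⟨m, j, hpm, _, _, _, hj1, hj2, hb2, hk1, hrec, hgdi⟩ :=
        forward_mid hs hpos hi1 (by omega)
      obtain ⟨m', j', hpm', _, _, _, hj1', hj2', hb2', hk1', hrec', hgdi'⟩ :=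
        forward_mid hs' hpos' hi1' (by omega)
      rw [hpm, hpm', Prod.mk.injEq] at heq
      obtain ⟨he1, he2⟩ := heq
      subst he1; subst he2
      have hll : l = l' := by rw [← hrec, ← hrec']
      subst hll
      have hii : i - 1 = i' - 1 := by
        apply nodup_getD_inj (List.nodup_dedup l) (by omega) (by omega)
        rw [hgdi, hgdi']
      have : i = i' := by omega
      rw [this]
  · -- SurjOn
    rintro ⟨m, j⟩ ⟨⟨hmp, hms, hmsum⟩, hj1, hj2⟩
    dsimp only at hmp hms hmsum hj1 hj2
    have hne : m ≠ [] := by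
      intro h
      rw [h] at hmsum
      simp at hmsum
    obtain ⟨l, i, hpm, hsl, hposl, hsum, hi1, hi2⟩ := backward hms hmp hne hj1 hj2
    exact ⟨(l, i), ⟨⟨hposl, hsl, by show l.sum = n; omega⟩, hi1, hi2⟩, hpm⟩
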